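/- Let α > 0 and β ∈ ℝ. Then there exists c > 0 depending only on α and β such that for all ε ∈ [0,1], λ ∈ ℝ and ρ ≥ 0: |ε²λ² + ρ + 1 - 2(α+iβ)·iλ| ≥ c·(ε²λ² + ρ + 1 + |λ|). -/

import Mathlib

open Complex in
theorem stmt_13 (α β : ℝ) (hα : 0 < α) :
    ∃ c > (0 : ℝ), ∀ ε : ℝ, 0 ≤ ε → ε ≤ 1 → ∀ lam ρ : ℝ, 0 ≤ ρ →
      c * (ε ^ 2 * lam ^ 2 + ρ + 1 + |lam|) ≤
        ‖((ε ^ 2 * lam ^ 2 + ρ + 1 : ℝ) - 2 * ((α : ℂ) + β * I) * (I * lam) : ℂ)‖ := by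
  set b := |β| with hb
  have hb0 : 0 ≤ b := abs_nonneg β
  have hd : 0 < α + b + 1 := by linarith
  refine ⟨α / (α + b + 1), div_pos hα hd, ?_⟩
  intro ε hε0 hε1 lam ρ hρ
  set c := α / (α + b + 1) with hc
  have hc0 : 0 < c := div_pos hα hd
  have hcd : c * (α + b + 1) = α := div_mul_cancel₀ α hd.ne'
  have hc1 : c ≤ 1 := by
    rw [hc, div_le_one hd]; linarith
  set X := ε ^ 2 * lam ^ 2 + ρ + 1 with hX
  have hX0 : 0 ≤ X := by positivity
  set z : ℂ := (X : ℝ) - 2 * ((α : ℂ) + β * I) * (I * lam) with hz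
  have hre : z.re = X + 2 * β * lam := by simp [hz]
  have him : z.im = -(2 * α * lam) := by simp [hz]
  set L := |lam| with hL
  have hL0 : 0 ≤ L := abs_nonneg lam
  have h1 : X - 2 * b * L ≤ ‖z‖ := by
    have := Complex.abs_re_le_norm z
    have h2 : -(b * L) ≤ β * lam := by
      have := neg_abs_le (β * lam)
      rwa [abs_mul] at this
    rw [hre] at this
    have := (le_abs_self (X + 2 * β * lam)).trans this
    linarith
  have h2 : 2 * α * L ≤ ‖z‖ := by
    have := Complex.abs_im_le_norm z
    rw [him, abs_neg, abs_mul, abs_mul] at this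
    rw [abs_of_pos hα] at this
    simpa using this
  nlinarith [mul_le_mul_of_nonneg_left h1 hc0.le,
    mul_le_mul_of_nonneg_left h2 (by linarith : (0:ℝ) ≤ 1 - c),
    mul_nonneg hc0.le hL0, mul_nonneg hb0 hL0]
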